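/- Let X : ℝ^d → ℝ^d be a continuously differentiable vector field and let φ : ℝ × ℝ^d → ℝ^d satisfy φ(0, p) = p and ∂_t φ(t, p) = X(φ(t, p)) for all (t, p) (φ is a flow of X). Suppose the flow is periodic of period one: φ(1, p) = p for all p. Then for every p ∈ ℝ^d, the average of the divergence of X along the orbit vanishes: ∫₀¹ div X(φ(s, p)) ds = 0, where div X(x) = trace(DX(x)). -/

import Mathlib

open Set Matrix

/-- Derivative of determinant of a matrix-valued function of one variable. -/
lemma hasDerivWithinAt_det {n : ℕ} {m : ℝ → Matrix (Fin n) (Fin n) ℝ}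
    {m' : Matrix (Fin n) (Fin n) ℝ} {s : Set ℝ} {t : ℝ}
    (h : ∀ i j, HasDerivWithinAt (fun τ => m τ i j) (m' i j) s t) :
    HasDerivWithinAt (fun τ => (m τ).det)
      (∑ i, (Matrix.updateRow (m t) i (m' i)).det) s t := by
  have key : ∀ σ : Equiv.Perm (Fin n),
      HasDerivWithinAt (fun τ => ((Equiv.Perm.sign σ : ℤ) : ℝ) * ∏ i, m τ (σ i) i)
        (((Equiv.Perm.sign σ : ℤ) : ℝ) *
          ∑ i, (∏ j ∈ Finset.univ.erase i, m t (σ j) j) * m' (σ i) i) s t := by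
    intro σ
    have := HasDerivWithinAt.finset_prod
      (u := (Finset.univ : Finset (Fin n))) (f := fun i τ => m τ (σ i) i)
      (f' := fun i => m' (σ i) i) (x := t) (s := s) (fun i _ => h (σ i) i)
    simpa [smul_eq_mul] using this.const_mul ((Equiv.Perm.sign σ : ℤ) : ℝ)
  have sum := HasDerivWithinAt.sum (u := (Finset.univ : Finset (Equiv.Perm (Fin n))))
    (fun σ _ => key σ)
  have e1 : (fun τ => (m τ).det) =
      fun τ => ∑ σ : Equiv.Perm (Fin n), ((Equiv.Perm.sign σ : ℤ) : ℝ) * ∏ i, m τ (σ i) i := by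
    funext τ; rw [Matrix.det_apply']
  rw [Finset.sum_fn] at sum
  rw [e1]
  refine sum.congr_deriv (Eq.symm ?_)
  -- identity: ∑ r det(updateRow (m t) r (m' r)) = ∑ σ sign σ * ∑ i ...
  calc ∑ r, (Matrix.updateRow (m t) r (m' r)).det
      = ∑ r, ∑ σ : Equiv.Perm (Fin n), ((Equiv.Perm.sign σ : ℤ) : ℝ) *
          ∏ i, Matrix.updateRow (m t) r (m' r) (σ i) i := by
        simp_rw [Matrix.det_apply']
    _ = ∑ σ : Equiv.Perm (Fin n), ∑ r, ((Equiv.Perm.sign σ : ℤ) : ℝ) *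
          ∏ i, Matrix.updateRow (m t) r (m' r) (σ i) i := Finset.sum_comm
    _ = ∑ σ : Equiv.Perm (Fin n), ((Equiv.Perm.sign σ : ℤ) : ℝ) *
          ∑ i, (∏ j ∈ Finset.univ.erase i, m t (σ j) j) * m' (σ i) i := by
        refine Finset.sum_congr rfl fun σ _ => ?_
        rw [← Finset.mul_sum]
        congr 1
        -- reindex r := σ i
        rw [← Equiv.sum_comp σ (fun r => ∏ i, Matrix.updateRow (m t) r (m' r) (σ i) i)]
        refine Finset.sum_congr rfl fun i _ => ?_
        -- now r = σ i; the factor at position i is m' (σ i) i, others m t (σ j) j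
        rw [← Finset.mul_prod_erase _ _ (Finset.mem_univ i)]
        rw [Matrix.updateRow_self]
        rw [mul_comm]
        congr 1
        refine Finset.prod_congr rfl fun j hj => ?_
        rw [Matrix.updateRow_apply, if_neg]
        exact fun hc => (Finset.ne_of_mem_erase hj) (σ.injective hc)

open Set

lemma deriv_Ici_of_Icc {F : Type*} [NormedAddCommGroup F] [NormedSpace ℝ F]
    {f : ℝ → F} {f' : F} {a b t : ℝ} (h : HasDerivWithinAt f f' (Icc a b) t)
    (ht : t ∈ Ico a b) : HasDerivWithinAt f f' (Ici t) t :=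
  h.mono_of_mem_nhdsWithin (Icc_mem_nhdsGE_of_mem ht)

lemma exists_linearODE {F : Type*} [NormedAddCommGroup F] [NormedSpace ℝ F] [CompleteSpace F]
    (A : ℝ → F →L[ℝ] F) (hA : Continuous A) (L : ℝ)
    (hL : ∀ t ∈ Icc (0:ℝ) 1, ‖A t‖ ≤ L) (x₀ : F) :
    ∃ M : ℝ → F, M 0 = x₀ ∧
      ∀ t ∈ Icc (0:ℝ) 1, HasDerivWithinAt M (A t (M t)) (Icc (0:ℝ) 1) t := by
  classical
  set C : ℝ := max L 0 + 1 with hCdef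
  have hC0 : 0 < C := by positivity
  have hC : ∀ t ∈ Icc (0:ℝ) 1, ‖A t‖ ≤ C := fun t ht =>
    (hL t ht).trans (by simp [hCdef]; linarith [le_max_left L 0])
  set B : ℝ := (‖x₀‖ + 1) * Real.exp C with hBdef
  have hB0 : 0 < B := by positivity
  set ℓ : ℝ := 1 / (C * (B + 1) + 1) with hldef
  have hCB0 : 0 < C * (B + 1) + 1 := by positivity
  have hl0 : 0 < ℓ := by positivity
  -- a priori norm bound for solutions
  have normbound : ∀ b ∈ Icc (0:ℝ) 1, ∀ M : ℝ → F, M 0 = x₀ →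
      (∀ t ∈ Icc 0 b, HasDerivWithinAt M (A t (M t)) (Icc 0 b) t) →
      ∀ t ∈ Icc 0 b, ‖M t‖ ≤ B := by
    intro b hb M hM0 hM t ht
    have hcont : ContinuousOn M (Icc 0 b) := fun s hs => (hM s hs).continuousWithinAt
    have hbnd := norm_le_gronwallBound_of_norm_deriv_right_le (f := M)
      (f' := fun t => A t (M t)) (δ := ‖x₀‖) (K := C) (ε := 0) (a := 0) (b := b)
      hcont
      (fun s hs => deriv_Ici_of_Icc (hM s (Ico_subset_Icc_self hs)) hs)
      (by rw [hM0])
      (fun s hs => by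
        have h1 : ‖A s‖ ≤ C := hC s ⟨hs.1, hs.2.le.trans hb.2⟩
        have := (A s).le_opNorm (M s)
        calc ‖A s (M s)‖ ≤ ‖A s‖ * ‖M s‖ := this
          _ ≤ C * ‖M s‖ + 0 := by
              rw [add_zero]
              exact mul_le_mul_of_nonneg_right h1 (norm_nonneg _))
      t ht
    rw [gronwallBound_ε0, sub_zero] at hbnd
    calc ‖M t‖ ≤ ‖x₀‖ * Real.exp (C * t) := hbnd
      _ ≤ (‖x₀‖ + 1) * Real.exp C := by
          apply mul_le_mul (by linarith) ?_ (Real.exp_nonneg _) (by positivity)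
          exact Real.exp_le_exp.2 (by nlinarith [ht.1, ht.2.trans hb.2, hC0])
      _ = B := rfl
  -- induction on steps
  have main : ∀ n : ℕ, ∃ M : ℝ → F, M 0 = x₀ ∧
      ∀ t ∈ Icc 0 (min (n * ℓ) 1), HasDerivWithinAt M (A t (M t)) (Icc 0 (min (n * ℓ) 1)) t := by
    intro n
    induction n with
    | zero =>
      refine ⟨fun _ => x₀, rfl, ?_⟩
      intro t ht
      simp only [Nat.cast_zero, zero_mul, min_eq_left zero_le_one] at ht ⊢
      have ht0 : t = 0 := le_antisymm ht.2 ht.1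
      subst ht0
      rw [Icc_self]
      rw [hasDerivWithinAt_iff_isLittleO, nhdsWithin_singleton, Asymptotics.isLittleO_pure]
      simp
    | succ n ih =>
      obtain ⟨M, hM0, hM⟩ := ih
      by_cases hn1 : 1 ≤ (n : ℝ) * ℓ
      · have he : min ((n:ℝ) * ℓ) 1 = 1 := min_eq_right hn1
        have he2 : min (((n:ℕ)+1 : ℕ) * ℓ : ℝ) 1 = 1 := by
          apply min_eq_right
          push_cast
          nlinarith
        refine ⟨M, hM0, ?_⟩
        rw [he2, ← he]
        push_cast
        exact hM
      · push_neg at hn1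
        set c : ℝ := (n : ℝ) * ℓ with hcdef
        have hc0 : 0 ≤ c := by positivity
        have hce : min c 1 = c := min_eq_left hn1.le
        set b : ℝ := min (((n:ℝ)+1) * ℓ) 1 with hbdef
        have hcb : c < b := by
          apply lt_min _ hn1
          nlinarith
        have hb1 : b ≤ 1 := min_le_right _ _
        have hbc : b - c ≤ ℓ := by
          have : b ≤ ((n:ℝ)+1) * ℓ := min_le_left _ _
          nlinarith
        rw [hce] at hM
        have hMB : ∀ t ∈ Icc 0 c, ‖M t‖ ≤ B :=
          normbound c ⟨hc0, hn1.le⟩ M hM0 hM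
        have hx₁ : ‖M c‖ ≤ B := hMB c ⟨hc0, le_rfl⟩
        -- Picard–Lindelöf on [c, b]
        have hpl : IsPicardLindelof (fun t x => A t x) (tmin := c) (tmax := b)
            ⟨c, le_rfl, hcb.le⟩ (M c) 1 0 (C * (B + 1)).toNNReal C.toNNReal := by
          constructor
          · intro t ht
            have h1 : ‖A t‖₊ ≤ C.toNNReal := by
              rw [← Real.toNNReal_coe (r := ‖A t‖₊)]
              exact Real.toNNReal_mono (hC t ⟨hc0.trans ht.1, ht.2.trans hb1⟩)
            exact ((A t).lipschitz.weaken h1).lipschitzOnWith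
          · intro x _
            exact ((ContinuousLinearMap.apply ℝ F x).continuous.comp hA).continuousOn
          · intro t ht x hx
            have h1 : ‖A t‖ ≤ C := hC t ⟨hc0.trans ht.1, ht.2.trans hb1⟩
            have h2 : ‖x‖ ≤ B + 1 := by
              have := mem_closedBall_iff_norm.1 hx
              simp only [NNReal.coe_one] at this
              calc ‖x‖ = ‖x - M c + M c‖ := by rw [sub_add_cancel]
                _ ≤ ‖x - M c‖ + ‖M c‖ := norm_add_le _ _
                _ ≤ 1 + B := add_le_add this hx₁
                _ = B + 1 := by ring
            rw [Real.coe_toNNReal _ (by positivity)]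
            calc ‖A t x‖ ≤ ‖A t‖ * ‖x‖ := (A t).le_opNorm x
              _ ≤ C * (B + 1) := mul_le_mul h1 h2 (norm_nonneg _) hC0.le
          · rw [Real.coe_toNNReal _ (by positivity)]
            simp only [NNReal.coe_one, NNReal.coe_zero, sub_zero]
            have : max (b - c) (c - c) = b - c := by
              rw [max_eq_left]; linarith
            rw [this]
            calc C * (B + 1) * (b - c) ≤ C * (B + 1) * ℓ :=
                  mul_le_mul_of_nonneg_left hbc (by positivity)
              _ ≤ 1 := by
                  rw [hldef]
                  rw [mul_one_div, div_le_one hCB0]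
                  linarith
        obtain ⟨g, hg0, hg⟩ := hpl.exists_eq_forall_mem_Icc_hasDerivWithinAt₀
        have hg0 : g c = M c := hg0
        -- glue
        set Mg : ℝ → F := fun t => if t ≤ c then M t else g t with hMgdef
        have heq1 : EqOn Mg M (Icc 0 c) := fun s hs => if_pos hs.2
        have heq2 : EqOn Mg g (Icc c b) := by
          intro s hs
          by_cases hsc : s ≤ c
          · have : s = c := le_antisymm hsc hs.1
            subst this
            simp only [hMgdef, if_pos le_rfl, hg0]
          · exact if_neg hsc
        have hunion : Icc (0:ℝ) c ∪ Icc c b = Icc 0 b :=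
          Icc_union_Icc_eq_Icc hc0 hcb.le
        have key : ∀ t ∈ Icc 0 b, HasDerivWithinAt Mg (A t (Mg t)) (Icc 0 b) t := by
          intro t ht
          rcases lt_trichotomy t c with h | h | h
          · -- t < c
            have h1 : HasDerivWithinAt M (A t (M t)) (Icc 0 c) t := hM t ⟨ht.1, h.le⟩
            have hmem : Icc 0 c ∈ nhdsWithin t (Icc 0 b) :=
              mem_nhdsWithin.2 ⟨Iio c, isOpen_Iio, h,
                fun s hs => ⟨hs.2.1, hs.1.le⟩⟩
            have h2 := h1.mono_of_mem_nhdsWithin hmem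
            have hev : ∀ᶠ s in nhdsWithin t (Icc 0 b), Mg s = M s :=
              Filter.eventually_of_mem
                (mem_nhdsWithin_of_mem_nhds (Iio_mem_nhds h))
                (fun s hs => if_pos (le_of_lt hs))
            have hMgt : Mg t = M t := if_pos h.le
            rw [← hMgt] at h2
            exact h2.congr_of_eventuallyEq (hev.mono fun s hs => hs) hMgt
          · -- t = c
            rw [h]
            have cmem1 : c ∈ Icc (0:ℝ) c := ⟨hc0, le_rfl⟩
            have cmem2 : c ∈ Icc c b := ⟨le_rfl, hcb.le⟩
            have d1 : HasDerivWithinAt Mg (A c (M c)) (Icc 0 c) c :=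
              (hM c cmem1).congr heq1 (heq1 cmem1)
            have d2 : HasDerivWithinAt Mg (A c (M c)) (Icc c b) c := by
              have := (hg c cmem2).congr heq2 (heq2 cmem2)
              rwa [hg0] at this
            have hun := d1.union d2
            rw [hunion] at hun
            have hMgt : Mg c = M c := if_pos le_rfl
            rwa [← hMgt] at hun
          · -- t > c
            have h1 : HasDerivWithinAt g (A t (g t)) (Icc c b) t := hg t ⟨h.le, ht.2⟩
            have hmem : Icc c b ∈ nhdsWithin t (Icc 0 b) :=
              mem_nhdsWithin.2 ⟨Ioi c, isOpen_Ioi, h,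
                fun s hs => ⟨hs.1.le, hs.2.2⟩⟩
            have h2 := h1.mono_of_mem_nhdsWithin hmem
            have hev : ∀ᶠ s in nhdsWithin t (Icc 0 b), Mg s = g s :=
              Filter.eventually_of_mem
                (mem_nhdsWithin_of_mem_nhds (Ioi_mem_nhds h))
                (fun s hs => if_neg (not_le.2 hs))
            have hMgt : Mg t = g t := if_neg (not_le.2 h)
            rw [← hMgt] at h2
            exact h2.congr_of_eventuallyEq (hev.mono fun s hs => hs) hMgt
        have hb' : min ((((n:ℕ)+1 : ℕ)) * ℓ : ℝ) 1 = b := by push_cast; rfl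
        refine ⟨Mg, ?_, ?_⟩
        · have : Mg 0 = M 0 := if_pos hc0
          rw [this, hM0]
        · rw [hb']
          exact key
  -- conclude: pick n with 1 ≤ n ℓ
  obtain ⟨M, hM0, hM⟩ := main ⌈1/ℓ⌉₊
  have hn : 1 ≤ (⌈1/ℓ⌉₊ : ℝ) * ℓ := by
    have h2 := mul_le_mul_of_nonneg_right (Nat.le_ceil (1/ℓ)) hl0.le
    rwa [div_mul_cancel₀ 1 (ne_of_gt hl0)] at h2
  rw [min_eq_right hn] at hM
  exact ⟨M, hM0, hM⟩

open Real MeasureTheory intervalIntegral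

set_option maxHeartbeats 2000000 in
/-- If a `C¹` vector field `X` on `ℝ^d` generates a flow that is periodic of
period one, then the average of the divergence of `X` along every orbit vanishes:
`∫₀¹ div X(φ_s(p)) ds = 0`. -/
theorem stmt_16 {d : ℕ}
    (X : (Fin d → ℝ) → Fin d → ℝ) (hX : ContDiff ℝ 1 X)
    (φ : ℝ → (Fin d → ℝ) → Fin d → ℝ)
    (hφ0 : ∀ p, φ 0 p = p)
    (hflow : ∀ t p, HasDerivAt (fun s => φ s p) (X (φ t p)) t)
    (hper : ∀ p, φ 1 p = p) :
    ∀ p, ∫ s in (0:ℝ)..1,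
      LinearMap.trace ℝ (Fin d → ℝ)
        ((fderiv ℝ X (φ s p) : (Fin d → ℝ) →L[ℝ] (Fin d → ℝ)) :
          (Fin d → ℝ) →ₗ[ℝ] (Fin d → ℝ)) = 0 := by
  classical
  intro p
  have hXd : Differentiable ℝ X := hX.differentiable one_ne_zero
  have hDXc : Continuous (fun x => fderiv ℝ X x) := hX.continuous_fderiv one_ne_zero
  set γ : ℝ → (Fin d → ℝ) := fun s => φ s p with hγdef
  have hγd : Differentiable ℝ γ := fun t => (hflow t p).differentiableAt
  have hγc : Continuous γ := hγd.continuous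
  have hγ0 : γ 0 = p := hφ0 p
  have hγ1 : γ 1 = p := hper p
  -- compact convex set containing the orbit with room to spare
  obtain ⟨R₀, hR₀⟩ := (isCompact_Icc (a := (0:ℝ)) (b := 1)).exists_bound_of_continuousOn
    hγc.continuousOn
  have hR₀0 : 0 ≤ R₀ := le_trans (norm_nonneg (γ 0)) (hR₀ 0 ⟨le_rfl, zero_le_one⟩)
  set R : ℝ := R₀ + 2 with hRdef
  set K : Set (Fin d → ℝ) := Metric.closedBall 0 R with hKdef
  have hKcomp : IsCompact K := isCompact_closedBall _ _
  have hKconv : Convex ℝ K := convex_closedBall _ _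
  have hγK : ∀ s ∈ Icc (0:ℝ) 1, γ s ∈ K := fun s hs =>
    mem_closedBall_zero_iff.2 ((hR₀ s hs).trans (by linarith))
  -- Lipschitz bound
  obtain ⟨L₀, hL₀⟩ := hKcomp.exists_bound_of_continuousOn hDXc.continuousOn
  set L : ℝ := max L₀ 1 with hLdef
  have hL1 : (1:ℝ) ≤ L := le_max_right _ _
  have hL0 : (0:ℝ) < L := lt_of_lt_of_le zero_lt_one hL1
  have hLK : ∀ x ∈ K, ‖fderiv ℝ X x‖ ≤ L := fun x hx =>
    (hL₀ x hx).trans (le_max_left _ _)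
  have hlip : LipschitzOnWith L.toNNReal X K := by
    apply LipschitzOnWith.of_dist_le_mul
    intro x hx y hy
    rw [dist_eq_norm, dist_eq_norm, Real.coe_toNNReal _ hL0.le]
    exact hKconv.norm_image_sub_le_of_norm_fderiv_le
      (fun z _ => hXd z) hLK hy hx
  set A : ℝ → (Fin d → ℝ) →L[ℝ] (Fin d → ℝ) := fun s => fderiv ℝ X (γ s) with hAdef
  have hAc : Continuous A := hDXc.comp hγc
  have hAle : ∀ s ∈ Icc (0:ℝ) 1, ‖A s‖ ≤ L := fun s hs => hLK _ (hγK s hs)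
  -- variational (monodromy) equation
  set A' : ℝ → ((Fin d → ℝ) →L[ℝ] (Fin d → ℝ)) →L[ℝ] ((Fin d → ℝ) →L[ℝ] (Fin d → ℝ)) :=
    fun s => ContinuousLinearMap.compL ℝ _ _ _ (A s) with hA'def
  have hA'c : Continuous A' := (ContinuousLinearMap.compL ℝ _ _ _).continuous.comp hAc
  have hA'le : ∀ s ∈ Icc (0:ℝ) 1, ‖A' s‖ ≤ L := by
    intro s hs
    apply ContinuousLinearMap.opNorm_le_bound _ hL0.le
    intro B
    calc ‖(A s).comp B‖ ≤ ‖A s‖ * ‖B‖ := ContinuousLinearMap.opNorm_comp_le _ _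
      _ ≤ L * ‖B‖ := mul_le_mul_of_nonneg_right (hAle s hs) (norm_nonneg _)
  obtain ⟨M, hM0, hMd⟩ := exists_linearODE A' hA'c L hA'le (ContinuousLinearMap.id ℝ _)
  have hMc : ContinuousOn M (Icc 0 1) := fun s hs => (hMd s hs).continuousWithinAt
  -- trajectories starting near p stay in K and stay close to γ
  have traj : ∀ q : Fin d → ℝ, dist q p < Real.exp (-L) →
      (∀ s ∈ Icc (0:ℝ) 1, φ s q ∈ K) ∧
      (∀ s ∈ Icc (0:ℝ) 1, dist (φ s q) (γ s) ≤ dist q p * Real.exp (L * s)) := by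
    intro q hq
    have hφqc : Continuous (fun s => φ s q) :=
      Differentiable.continuous (fun t => (hflow t q).differentiableAt)
    have gronS : ∀ b, 0 ≤ b → b ≤ 1 → (∀ s ∈ Ico 0 b, φ s q ∈ K) →
        ∀ s ∈ Icc 0 b, dist (φ s q) (γ s) ≤ dist q p * Real.exp (L * s) := by
      intro b hb0 hb1 hmem s hs
      have := dist_le_of_trajectories_ODE_of_mem (v := fun _ x => X x)
        (s := fun _ => K) (K := L.toNNReal)
        (fun _ _ => hlip)
        hφqc.continuousOn
        (fun t _ => (hflow t q).hasDerivWithinAt)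
        hmem
        hγc.continuousOn
        (fun t _ => (hflow t p).hasDerivWithinAt)
        (fun t ht => hγK t ⟨ht.1, ht.2.le.trans hb1⟩)
        (le_refl (dist (φ 0 q) (γ 0)))
        s hs
      rwa [hφ0 q, hγ0, Real.coe_toNNReal _ hL0.le, sub_zero] at this
    set S : Set ℝ := {t | t ∈ Icc (0:ℝ) 1 ∧ ∀ s ∈ Icc 0 t, φ s q ∈ K} with hSdef
    have hqK : φ 0 q ∈ K := by
      rw [hφ0 q]
      rw [mem_closedBall_zero_iff]
      have h1 : ‖p‖ ≤ R₀ := hγ0 ▸ hR₀ 0 ⟨le_rfl, zero_le_one⟩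
      have h2 : dist q p ≤ 1 := hq.le.trans (by
        calc Real.exp (-L) ≤ Real.exp 0 := Real.exp_le_exp.2 (by linarith)
          _ = 1 := Real.exp_zero)
      calc ‖q‖ = ‖q - p + p‖ := by rw [sub_add_cancel]
        _ ≤ ‖q - p‖ + ‖p‖ := norm_add_le _ _
        _ ≤ 1 + R₀ := add_le_add (by rwa [← dist_eq_norm]) h1
        _ ≤ R := by linarith
    have h0S : (0:ℝ) ∈ S := by
      refine ⟨⟨le_rfl, zero_le_one⟩, fun s hs => ?_⟩
      have : s = 0 := le_antisymm hs.2 hs.1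
      rwa [this]
    have hSbdd : BddAbove S := ⟨1, fun t ht => ht.1.2⟩
    set T := sSup S with hTdef
    have hT0 : 0 ≤ T := le_csSup hSbdd h0S
    have hT1 : T ≤ 1 := csSup_le ⟨0, h0S⟩ fun t ht => ht.1.2
    have hIco : ∀ s ∈ Ico 0 T, φ s q ∈ K := by
      intro s hs
      obtain ⟨t, htS, hst⟩ := exists_lt_of_lt_csSup ⟨0, h0S⟩ hs.2
      exact htS.2 s ⟨hs.1, hst.le⟩
    have hgT := gronS T hT0 hT1 hIco
    have hclose : ∀ s ∈ Icc 0 T, ‖φ s q‖ < R₀ + 2 := by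
      intro s hs
      have h1 := hgT s hs
      have h2 : dist q p * Real.exp (L * s) < 1 := by
        calc dist q p * Real.exp (L * s) < Real.exp (-L) * Real.exp (L * s) :=
              mul_lt_mul_of_pos_right hq (Real.exp_pos _)
          _ ≤ Real.exp (-L) * Real.exp L := by
              apply mul_le_mul_of_nonneg_left _ (Real.exp_nonneg _)
              apply Real.exp_le_exp.2
              nlinarith [hs.2.trans hT1, hs.1]
          _ = 1 := by rw [← Real.exp_add]; norm_num
      have h3 : ‖γ s‖ ≤ R₀ := hR₀ s ⟨hs.1, hs.2.trans hT1⟩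
      calc ‖φ s q‖ = ‖φ s q - γ s + γ s‖ := by rw [sub_add_cancel]
        _ ≤ ‖φ s q - γ s‖ + ‖γ s‖ := norm_add_le _ _
        _ < 1 + R₀ := by
            apply add_lt_add_of_lt_of_le _ h3
            rw [← dist_eq_norm]; exact lt_of_le_of_lt h1 h2
        _ ≤ R₀ + 2 := by linarith
    have hTS : T ∈ S := ⟨⟨hT0, hT1⟩, fun s hs =>
      mem_closedBall_zero_iff.2 (hclose s hs).le⟩
    have hTeq : T = 1 := by
      by_contra hne
      have hTlt : T < 1 := lt_of_le_of_ne hT1 hne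
      have hopen : IsOpen {s : ℝ | ‖φ s q‖ < R} := isOpen_lt (hφqc.norm) continuous_const
      have hTmem : T ∈ {s : ℝ | ‖φ s q‖ < R} := hclose T ⟨hT0, le_rfl⟩
      obtain ⟨δ, hδ0, hδ⟩ := Metric.isOpen_iff.1 hopen T hTmem
      set t' := min (T + δ/2) 1 with ht'def
      have ht'T : T < t' := lt_min (by linarith) hTlt
      have ht'S : t' ∈ S := by
        refine ⟨⟨by linarith, min_le_right _ _⟩, fun s hs => ?_⟩
        rcases le_or_gt s T with h | h
        · exact hTS.2 s ⟨hs.1, h⟩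
        · apply mem_closedBall_zero_iff.2
          apply le_of_lt
          apply hδ
          rw [Metric.mem_ball, Real.dist_eq, abs_of_pos (by linarith)]
          have : s ≤ T + δ/2 := hs.2.trans (min_le_left _ _)
          linarith
      exact absurd (le_csSup hSbdd ht'S) (not_le.2 ht'T)
    rw [hTeq] at hTS hgT
    exact ⟨hTS.2, hgT⟩
  -- uniform linearization estimate on K
  have lin : ∀ ε > (0:ℝ), ∃ δ > (0:ℝ), ∀ x ∈ K, ∀ y ∈ K, ‖y - x‖ ≤ δ →
      ‖X y - X x - fderiv ℝ X x (y - x)‖ ≤ ε * ‖y - x‖ := by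
    intro ε hε
    have hunif : UniformContinuousOn (fderiv ℝ X) K :=
      hKcomp.uniformContinuousOn_of_continuous hDXc.continuousOn
    rw [Metric.uniformContinuousOn_iff] at hunif
    obtain ⟨δ, hδ0, hδ⟩ := hunif ε hε
    refine ⟨δ/2, by positivity, ?_⟩
    intro x hx y hy hxy
    set s : Set (Fin d → ℝ) := K ∩ Metric.closedBall x (δ/2) with hsdef
    have hconv : Convex ℝ s := hKconv.inter (convex_closedBall _ _)
    have hxs : x ∈ s := ⟨hx, Metric.mem_closedBall_self (by positivity)⟩
    have hys : y ∈ s := ⟨hy, by rwa [Metric.mem_closedBall, dist_eq_norm]⟩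
    have key := hconv.norm_image_sub_le_of_norm_hasFDerivWithin_le
      (f := fun z => X z - fderiv ℝ X x z)
      (f' := fun z => fderiv ℝ X z - fderiv ℝ X x)
      (fun z _ => (((hXd z).hasFDerivAt).sub ((fderiv ℝ X x).hasFDerivAt)).hasFDerivWithinAt)
      (C := ε) ?_ hxs hys
    · have halg : X y - fderiv ℝ X x y - (X x - fderiv ℝ X x x) =
          X y - X x - fderiv ℝ X x (y - x) := by
        rw [map_sub]; abel
      rwa [halg] at key
    · intro z hz
      have h1 : dist (fderiv ℝ X z) (fderiv ℝ X x) < ε := by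
        apply hδ z hz.1 x hx
        rw [← Metric.mem_ball] at *
        exact lt_of_le_of_lt (Metric.mem_closedBall.1 hz.2) (by linarith)
      rw [dist_eq_norm] at h1
      exact h1.le
  -- the monodromy at time 1 is the identity
  have hM1 : M 1 = ContinuousLinearMap.id ℝ (Fin d → ℝ) := by
    refine ContinuousLinearMap.ext fun v => ?_
    have hsuff : ∀ ε > (0:ℝ), ‖M 1 v - v‖ ≤ ε := by
      intro ε hε
      set ε₀ : ℝ := ε / ((‖v‖ + 1) * Real.exp (2*L)) with hε₀def
      have hε₀0 : 0 < ε₀ := by positivity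
      obtain ⟨δ, hδ0, hlin⟩ := lin ε₀ hε₀0
      set c : ℝ := min (Real.exp (-L) / (2*(‖v‖+1))) (δ * Real.exp (-L) / (‖v‖+1)) with hcdef
      have hc0 : 0 < c := lt_min (by positivity) (by positivity)
      set q : Fin d → ℝ := c • v with hqdef
      have hqn : ‖q‖ = c * ‖v‖ := by
        rw [hqdef, norm_smul, Real.norm_eq_abs, abs_of_pos hc0]
      have hqsmall : ‖q‖ < Real.exp (-L) := by
        rw [hqn]
        calc c * ‖v‖ ≤ (Real.exp (-L) / (2*(‖v‖+1))) * ‖v‖ :=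
              mul_le_mul_of_nonneg_right (min_le_left _ _) (norm_nonneg v)
          _ < Real.exp (-L) := by
              rw [div_mul_eq_mul_div, div_lt_iff₀ (by positivity)]
              nlinarith [norm_nonneg v, Real.exp_pos (-L)]
      have hqδ : ‖q‖ * Real.exp L ≤ δ := by
        rw [hqn]
        calc c * ‖v‖ * Real.exp L ≤ (δ * Real.exp (-L) / (‖v‖+1)) * ‖v‖ * Real.exp L := by
              apply mul_le_mul_of_nonneg_right _ (Real.exp_nonneg _)
              exact mul_le_mul_of_nonneg_right (min_le_right _ _) (norm_nonneg v)
          _ ≤ (δ * Real.exp (-L) / (‖v‖+1)) * (‖v‖+1) * Real.exp L := by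
              apply mul_le_mul_of_nonneg_right _ (Real.exp_nonneg _)
              apply mul_le_mul_of_nonneg_left (by linarith) (by positivity)
          _ = δ * (Real.exp (-L) * Real.exp L) := by
              field_simp
          _ = δ := by rw [← Real.exp_add]; norm_num
      have hdqp : dist (p + q) p = ‖q‖ := by
        rw [dist_eq_norm, add_sub_cancel_left]
      obtain ⟨hqK, hqdist⟩ := traj (p + q) (by rwa [hdqp])
      -- the remainder function
      set r : ℝ → (Fin d → ℝ) := fun s => φ s (p + q) - γ s - M s q with hrdef
      have hφpqc : Continuous (fun s => φ s (p + q)) :=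
        Differentiable.continuous (fun t => (hflow t (p+q)).differentiableAt)
      have hrc : ContinuousOn r (Icc 0 1) :=
        ((hφpqc.continuousOn.sub hγc.continuousOn).sub
          (((ContinuousLinearMap.apply ℝ (Fin d → ℝ) q).continuous).comp_continuousOn hMc))
      have hr0 : r 0 = 0 := by
        simp only [hrdef, hφ0, hγ0, hM0, ContinuousLinearMap.id_apply]
        abel
      set ε₂ : ℝ := ε₀ * (‖q‖ * Real.exp L) with hε₂def
      have hrderiv : ∀ s ∈ Ico (0:ℝ) 1, HasDerivWithinAt r
          (X (φ s (p+q)) - X (γ s) - A s (M s q)) (Ici s) s := by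
        intro s hs
        have h1 : HasDerivWithinAt (fun τ => φ τ (p+q)) (X (φ s (p+q))) (Ici s) s :=
          (hflow s (p+q)).hasDerivWithinAt
        have h2 : HasDerivWithinAt γ (X (γ s)) (Ici s) s :=
          (hflow s p).hasDerivWithinAt
        have h3 : HasDerivWithinAt (fun τ => M τ q) (A s (M s q)) (Ici s) s := by
          have := ((ContinuousLinearMap.apply ℝ (Fin d → ℝ) q).hasFDerivAt).comp_hasDerivWithinAt
            s (hMd s (Ico_subset_Icc_self hs))
          exact deriv_Ici_of_Icc this hs
        exact (h1.sub h2).sub h3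
      have hrbound : ∀ s ∈ Ico (0:ℝ) 1,
          ‖X (φ s (p+q)) - X (γ s) - A s (M s q)‖ ≤ L * ‖r s‖ + ε₂ := by
        intro s hs
        have hsmem : s ∈ Icc (0:ℝ) 1 := Ico_subset_Icc_self hs
        set y := φ s (p+q) with hydef
        set x := γ s with hxdef
        have hyx : ‖y - x‖ ≤ ‖q‖ * Real.exp L := by
          rw [← dist_eq_norm]
          calc dist y x ≤ dist (p+q) p * Real.exp (L * s) := hqdist s hsmem
            _ = ‖q‖ * Real.exp (L * s) := by rw [hdqp]
            _ ≤ ‖q‖ * Real.exp L := by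
                apply mul_le_mul_of_nonneg_left _ (norm_nonneg q)
                apply Real.exp_le_exp.2
                nlinarith [hs.1, hs.2.le, hL0]
        have hρ : ‖X y - X x - A s (y - x)‖ ≤ ε₀ * ‖y - x‖ :=
          hlin x (hγK s hsmem) y (hqK s hsmem) (hyx.trans hqδ)
        have halg : X y - X x - A s (M s q) =
            A s (r s) + (X y - X x - A s (y - x)) := by
          have : A s (r s) = A s (y - x) - A s (M s q) := by
            rw [hrdef]
            simp only [map_sub]
            rfl
          rw [this]; abel
        rw [halg]
        calc ‖A s (r s) + (X y - X x - A s (y - x))‖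
            ≤ ‖A s (r s)‖ + ‖X y - X x - A s (y - x)‖ := norm_add_le _ _
          _ ≤ L * ‖r s‖ + ε₂ := by
              apply add_le_add
              · calc ‖A s (r s)‖ ≤ ‖A s‖ * ‖r s‖ := (A s).le_opNorm _
                  _ ≤ L * ‖r s‖ := mul_le_mul_of_nonneg_right (hAle s hsmem) (norm_nonneg _)
              · calc ‖X y - X x - A s (y - x)‖ ≤ ε₀ * ‖y - x‖ := hρ
                  _ ≤ ε₂ := by
                      rw [hε₂def]
                      exact mul_le_mul_of_nonneg_left hyx hε₀0.le
      have hgron := norm_le_gronwallBound_of_norm_deriv_right_le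
        (f := r) (f' := fun s => X (φ s (p+q)) - X (γ s) - A s (M s q))
        (δ := 0) (K := L) (ε := ε₂) (a := 0) (b := 1)
        hrc hrderiv (by rw [hr0]; simp) hrbound 1 ⟨zero_le_one, le_rfl⟩
      rw [sub_zero, gronwallBound_of_K_ne_0 (ne_of_gt hL0)] at hgron
      have hr1 : r 1 = q - M 1 q := by
        rw [hrdef]
        simp only [hper (p + q), hγ1]
        abel
      rw [hr1] at hgron
      have hfinal : ‖q - M 1 q‖ ≤ ε₀ * ‖q‖ * Real.exp (2*L) := by
        calc ‖q - M 1 q‖ ≤ 0 * Real.exp (L * 1) + ε₂ / L * (Real.exp (L * 1) - 1) := hgron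
          _ = ε₂ / L * (Real.exp L - 1) := by rw [zero_mul, zero_add, mul_one]
          _ ≤ ε₂ * (Real.exp L - 1) := by
              apply mul_le_mul_of_nonneg_right _ (by nlinarith [Real.exp_pos L, Real.add_one_le_exp L, hL0])
              rw [div_le_iff₀ hL0]
              nlinarith [hε₂def ▸ mul_nonneg hε₀0.le (mul_nonneg (norm_nonneg q) (Real.exp_nonneg L)), hL1]
          _ ≤ ε₂ * Real.exp L := by
              apply mul_le_mul_of_nonneg_left (by nlinarith [Real.exp_pos L])
              exact mul_nonneg hε₀0.le (mul_nonneg (norm_nonneg q) (Real.exp_nonneg L))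
          _ = ε₀ * ‖q‖ * Real.exp (2*L) := by
              rw [hε₂def, two_mul, Real.exp_add]; ring
      -- divide by c
      have hqlin : q - M 1 q = c • (v - M 1 v) := by
        rw [hqdef, ContinuousLinearMap.map_smul, smul_sub]
      rw [hqlin, norm_smul, Real.norm_eq_abs, abs_of_pos hc0, hqn] at hfinal
      have hdiv : ‖v - M 1 v‖ ≤ ε₀ * ‖v‖ * Real.exp (2*L) := by
        have := hfinal
        rw [show ε₀ * (c * ‖v‖) * Real.exp (2*L) = c * (ε₀ * ‖v‖ * Real.exp (2*L)) by ring] at this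
        exact le_of_mul_le_mul_left this hc0
      rw [norm_sub_rev]
      calc ‖v - M 1 v‖ ≤ ε₀ * ‖v‖ * Real.exp (2*L) := hdiv
        _ ≤ ε₀ * (‖v‖ + 1) * Real.exp (2*L) := by
            apply mul_le_mul_of_nonneg_right _ (Real.exp_nonneg _)
            apply mul_le_mul_of_nonneg_left (by linarith) hε₀0.le
        _ = ε := by
            rw [hε₀def]
            field_simp
    have : ‖M 1 v - v‖ ≤ 0 := by
      by_contra h
      push_neg at h
      exact absurd (hsuff (‖M 1 v - v‖ / 2) (by linarith)) (by push_neg; linarith)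
    have h0 : M 1 v - v = 0 := by
      rwa [← norm_le_zero_iff]
    simpa [sub_eq_zero] using h0
  -- Liouville: determinant of the monodromy
  set m : ℝ → Matrix (Fin d) (Fin d) ℝ :=
    fun t => LinearMap.toMatrix' (M t : (Fin d → ℝ) →ₗ[ℝ] (Fin d → ℝ)) with hmdef
  set a : ℝ → Matrix (Fin d) (Fin d) ℝ :=
    fun t => LinearMap.toMatrix' (A t : (Fin d → ℝ) →ₗ[ℝ] (Fin d → ℝ)) with hadef
  set u : Fin d → (Fin d → ℝ) := fun j => fun j' => if j' = j then 1 else 0 with hudef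
  have hac : ∀ i j, Continuous (fun s => a s i j) := by
    intro i j
    have : (fun s => a s i j) = fun s => (A s) (u j) i := by
      funext s
      rw [hadef]
      simp [LinearMap.toMatrix'_apply, hudef, ← Pi.single_apply]
    rw [this]
    exact (continuous_apply i).comp ((ContinuousLinearMap.apply ℝ _ (u j)).continuous.comp hAc)
  have htrc : Continuous (fun s => Matrix.trace (a s)) := by
    simp only [Matrix.trace]
    exact continuous_finset_sum _ fun i _ => hac i i
  have hm' : ∀ t ∈ Icc (0:ℝ) 1, ∀ i j,
      HasDerivWithinAt (fun τ => m τ i j) ((a t * m t) i j) (Icc (0:ℝ) 1) t := by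
    intro t ht i j
    have heq : (fun τ => m τ i j) = fun τ =>
        ((ContinuousLinearMap.proj i).comp
          (ContinuousLinearMap.apply ℝ (Fin d → ℝ) (u j))) (M τ) := by
      funext τ
      rw [hmdef]
      simp [LinearMap.toMatrix'_apply, hudef, ← Pi.single_apply]
    have hval : ((ContinuousLinearMap.proj i).comp
        (ContinuousLinearMap.apply ℝ (Fin d → ℝ) (u j))) (A' t (M t)) = (a t * m t) i j := by
      have h1 : a t * m t = LinearMap.toMatrix'
          (((A t).comp (M t) : (Fin d → ℝ) →L[ℝ] (Fin d → ℝ)) :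
            (Fin d → ℝ) →ₗ[ℝ] (Fin d → ℝ)) := by
        rw [hadef, hmdef, ContinuousLinearMap.toLinearMap_comp, LinearMap.toMatrix'_comp]
      rw [h1]
      simp [LinearMap.toMatrix'_apply, hudef, hA'def, ← Pi.single_apply]
    rw [heq, ← hval]
    exact (((ContinuousLinearMap.proj i).comp
      (ContinuousLinearMap.apply ℝ (Fin d → ℝ) (u j))).hasFDerivAt).comp_hasDerivWithinAt
      t (hMd t ht)
  have hdet : ∀ t ∈ Icc (0:ℝ) 1, HasDerivWithinAt (fun τ => (m τ).det)
      (Matrix.trace (a t) * (m t).det) (Icc (0:ℝ) 1) t := by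
    intro t ht
    have := hasDerivWithinAt_det (m := m) (m' := a t * m t) (s := Icc 0 1) (t := t)
      (fun i j => hm' t ht i j)
    convert this using 1
    have hrow : ∀ i, (a t * m t) i = ∑ k, (a t i k) • (m t) k := by
      intro i
      funext j
      simp [Matrix.mul_apply, Finset.sum_apply]
    calc Matrix.trace (a t) * (m t).det = ∑ i, (a t i i) * (m t).det := by
          rw [Matrix.trace]; rw [Finset.sum_mul]; rfl
      _ = ∑ i, (Matrix.updateRow (m t) i ((a t * m t) i)).det := by
          refine Finset.sum_congr rfl fun i _ => ?_
          rw [hrow i, Matrix.det_updateRow_sum]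
          simp [smul_eq_mul]
  -- integral of the trace
  set I : ℝ → ℝ := fun t => ∫ s in (0:ℝ)..t, Matrix.trace (a s) with hIdef
  have hI : ∀ t, HasDerivAt I (Matrix.trace (a t)) t := fun t =>
    (htrc.integral_hasStrictDerivAt 0 t).hasDerivAt
  set g : ℝ → ℝ := fun t => (m t).det * Real.exp (-I t) with hgdef
  have hg' : ∀ t ∈ Icc (0:ℝ) 1, HasDerivWithinAt g 0 (Icc (0:ℝ) 1) t := by
    intro t ht
    have hexp : HasDerivWithinAt (fun τ => Real.exp (-I τ))
        (Real.exp (-I t) * (-(Matrix.trace (a t)))) (Icc (0:ℝ) 1) t :=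
      ((hI t).hasDerivWithinAt.neg).exp
    have := (hdet t ht).mul hexp
    refine this.congr_deriv ?_
    ring
  have hgc : ContinuousOn g (Icc 0 1) := fun s hs => (hg' s hs).continuousWithinAt
  have hgconst := constant_of_has_deriv_right_zero hgc
    (fun x hx => deriv_Ici_of_Icc (hg' x (Ico_subset_Icc_self hx)) hx)
  have hg1 : g 1 = g 0 := hgconst 1 ⟨zero_le_one, le_rfl⟩
  have hm0 : m 0 = 1 := by
    rw [hmdef]
    simp only [hM0]
    rw [show ((ContinuousLinearMap.id ℝ (Fin d → ℝ) : (Fin d → ℝ) →L[ℝ] (Fin d → ℝ)) :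
      (Fin d → ℝ) →ₗ[ℝ] (Fin d → ℝ)) = LinearMap.id from rfl]
    exact LinearMap.toMatrix'_id
  have hm1 : m 1 = 1 := by
    rw [hmdef]
    simp only [hM1]
    rw [show ((ContinuousLinearMap.id ℝ (Fin d → ℝ) : (Fin d → ℝ) →L[ℝ] (Fin d → ℝ)) :
      (Fin d → ℝ) →ₗ[ℝ] (Fin d → ℝ)) = LinearMap.id from rfl]
    exact LinearMap.toMatrix'_id
  have hg0v : g 0 = 1 := by
    rw [hgdef]
    simp only [hm0, Matrix.det_one, hIdef, intervalIntegral.integral_same, neg_zero,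
      Real.exp_zero, one_mul]
  have hg1v : g 1 = Real.exp (-I 1) := by
    rw [hgdef]
    simp only [hm1, Matrix.det_one, one_mul]
  have hIzero : I 1 = 0 := by
    have h1 : Real.exp (-I 1) = 1 := by rw [← hg1v, hg1, hg0v]
    have h2 : Real.exp (-I 1) = Real.exp 0 := by rw [h1, Real.exp_zero]
    have := Real.exp_injective h2
    linarith
  -- conclude
  have hinteg : (fun s => LinearMap.trace ℝ (Fin d → ℝ)
      ((fderiv ℝ X (φ s p) : (Fin d → ℝ) →L[ℝ] (Fin d → ℝ)) :
        (Fin d → ℝ) →ₗ[ℝ] (Fin d → ℝ))) = fun s => Matrix.trace (a s) := by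
    funext s
    rw [hadef]
    rw [LinearMap.trace_eq_matrix_trace ℝ (Pi.basisFun ℝ (Fin d))]
    rw [LinearMap.toMatrix_eq_toMatrix']
  rw [hinteg]
  exact hIzero
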